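/- Under the same setup (u_i(x) ≤ min{f_i(x), a_i} ≤ a_i, f_i^L ≤ f_i(x) ≤ f_i^U for i = 1,2), the following overestimating inequality holds for all x ∈ X: f_1(x) f_2(x) ≤ (f_2^L − a_2) u_1(x) + (a_1 − f_1^U) u_2(x) + a_2 f_1(x) + f_1^U f_2(x) − a_1 f_2^L. -/
import Mathlib

theorem stmt18 {X : Type*} (f₁ f₂ u₁ u₂ : X → ℝ)
    (f₁L f₁U f₂L f₂U a₁ a₂ : ℝ)
    (hb₁ : ∀ x, f₁L ≤ f₁ x ∧ f₁ x ≤ f₁U) (hb₂ : ∀ x, f₂L ≤ f₂ x ∧ f₂ x ≤ f₂U)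
    (ha₁ : f₁L ≤ a₁ ∧ a₁ ≤ f₁U) (ha₂ : f₂L ≤ a₂ ∧ a₂ ≤ f₂U)
    (hu₁ : ∀ x, u₁ x ≤ min (f₁ x) a₁) (hu₂ : ∀ x, u₂ x ≤ min (f₂ x) a₂) :
    ∀ x : X,
      f₁ x * f₂ x ≤
        (f₂L - a₂) * u₁ x + (a₁ - f₁U) * u₂ x + a₂ * f₁ x + f₁U * f₂ x - a₁ * f₂L := by
  intro x
  obtain ⟨h1L, h1U⟩ := hb₁ x
  obtain ⟨h2L, h2U⟩ := hb₂ x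
  have hu1f : u₁ x ≤ f₁ x := (hu₁ x).trans (min_le_left _ _)
  have hu1a : u₁ x ≤ a₁ := (hu₁ x).trans (min_le_right _ _)
  have hu2f : u₂ x ≤ f₂ x := (hu₂ x).trans (min_le_left _ _)
  have hu2a : u₂ x ≤ a₂ := (hu₂ x).trans (min_le_right _ _)
  rcases le_total a₂ (f₂ x) with h | h
  · nlinarith [mul_nonneg (sub_nonneg.2 h1U) (sub_nonneg.2 h),
      mul_nonneg (sub_nonneg.2 ha₂.1) (sub_nonneg.2 hu1a),
      mul_nonneg (sub_nonneg.2 ha₁.2) (sub_nonneg.2 hu2a)]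
  · rcases le_total (f₁ x) a₁ with h' | h'
    · nlinarith [mul_nonneg (sub_nonneg.2 h') (sub_nonneg.2 h2L),
        mul_nonneg (sub_nonneg.2 ha₂.1) (sub_nonneg.2 hu1f),
        mul_nonneg (sub_nonneg.2 ha₁.2) (sub_nonneg.2 hu2f)]
    · nlinarith [mul_nonneg (sub_nonneg.2 h') (sub_nonneg.2 h),
        mul_nonneg (sub_nonneg.2 ha₂.1) (sub_nonneg.2 hu1a),
        mul_nonneg (sub_nonneg.2 ha₁.2) (sub_nonneg.2 hu2f)]
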